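/- Let 𝔽_q be a finite field, let n ≥ 1 be an integer, let c ∈ 𝔽_q with c ≠ 0, and let α, β ∈ 𝔽_q with α ≠ 0 and β ≠ 0 such that there exists s ∈ 𝔽_q with s ≠ 0 and α·s² = β (i.e. α and β are both squares or both non-squares in 𝔽_q). Then the c-Boomerang uniformities of the Dickson polynomials of the first kind agree: β_{D_n(·,α), c} = β_{D_n(·,β), c}, where each Dickson polynomial is identified with its evaluation map 𝔽_q → 𝔽_q. -/

import Mathlib

/-- The `c`-Boomerang Connectivity Table entry of a function `F : 𝔽 → 𝔽` at `(a, b)`. -/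
noncomputable def cBCT {𝔽 : Type*} [Field 𝔽] (F : 𝔽 → 𝔽) (c a b : 𝔽) : ℕ :=
  Set.ncard {p : 𝔽 × 𝔽 |
    F (p.1 + p.2) - c * F p.1 = b ∧ c * F (p.1 + p.2 + a) - F (p.1 + a) = c * b}

/-- The `c`-Boomerang uniformity of `F : 𝔽 → 𝔽`: the maximum of the `c`-BCT entries over
all nonzero `a, b`. -/
noncomputable def cBoomerangUniformity {𝔽 : Type*} [Field 𝔽] (F : 𝔽 → 𝔽) (c : 𝔽) : ℕ :=
  sSup {m : ℕ | ∃ a b : 𝔽, a ≠ 0 ∧ b ≠ 0 ∧ m = cBCT F c a b}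

/-- Scaling identity for Dickson polynomials: `D_n(s·x, s²·α) = sⁿ · D_n(x, α)`. -/
lemma dickson_scale {𝔽 : Type*} [Field 𝔽] (s α : 𝔽) :
    ∀ (n : ℕ) (x : 𝔽),
      (Polynomial.dickson 1 (s ^ 2 * α) n).eval (s * x)
        = s ^ n * (Polynomial.dickson 1 α n).eval x
  | 0, x => by simp [Polynomial.dickson_zero]
  | 1, x => by simp [Polynomial.dickson_one]
  | (n + 2), x => by
    simp only [Polynomial.dickson_add_two, Polynomial.eval_sub, Polynomial.eval_mul,
      Polynomial.eval_X, Polynomial.eval_C]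
    rw [dickson_scale s α (n + 1) x, dickson_scale s α n x]
    ring

lemma cBCT_scale {𝔽 : Type*} [Field 𝔽] (F : 𝔽 → 𝔽) (s : 𝔽) (hs : s ≠ 0) (n : ℕ)
    (c a b : 𝔽) :
    cBCT (fun x => s ^ n * F (s⁻¹ * x)) c a b = cBCT F c (s⁻¹ * a) (s⁻¹ ^ n * b) := by
  have hsn : s ^ n ≠ 0 := pow_ne_zero n hs
  have cancel : ∀ X Y : 𝔽, s ^ n * X = Y ↔ X = s⁻¹ ^ n * Y := by
    intro X Y
    constructor
    · rintro rfl; field_simp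
      rw [one_div, inv_pow, mul_assoc, inv_mul_cancel₀ hsn, mul_one]
    · rintro rfl; field_simp
      rw [one_div, inv_pow, mul_inv_cancel₀ hsn, one_mul]
  have key : ∀ x y : 𝔽,
      ((fun x => s ^ n * F (s⁻¹ * x)) (x + y) - c * (fun x => s ^ n * F (s⁻¹ * x)) x = b ∧
        c * (fun x => s ^ n * F (s⁻¹ * x)) (x + y + a)
          - (fun x => s ^ n * F (s⁻¹ * x)) (x + a) = c * b)
      ↔ (F (s⁻¹ * x + s⁻¹ * y) - c * F (s⁻¹ * x) = s⁻¹ ^ n * b ∧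
        c * F (s⁻¹ * x + s⁻¹ * y + s⁻¹ * a) - F (s⁻¹ * x + s⁻¹ * a)
          = c * (s⁻¹ ^ n * b)) := by
    intro x y
    simp only
    have e1 : s⁻¹ * (x + y) = s⁻¹ * x + s⁻¹ * y := by ring
    have e2 : s⁻¹ * (x + y + a) = s⁻¹ * x + s⁻¹ * y + s⁻¹ * a := by ring
    have e3 : s⁻¹ * (x + a) = s⁻¹ * x + s⁻¹ * a := by ring
    rw [e1, e2, e3]
    generalize F (s⁻¹ * x + s⁻¹ * y) = A
    generalize F (s⁻¹ * x) = B
    generalize F (s⁻¹ * x + s⁻¹ * y + s⁻¹ * a) = C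
    generalize F (s⁻¹ * x + s⁻¹ * a) = D
    have r1 : s ^ n * A - c * (s ^ n * B) = s ^ n * (A - c * B) := by ring
    have r2 : c * (s ^ n * C) - s ^ n * D = s ^ n * (c * C - D) := by ring
    have r3 : c * (s⁻¹ ^ n * b) = s⁻¹ ^ n * (c * b) := by ring
    rw [r1, r2, r3, cancel, cancel]
  have hinj : Function.Injective (fun p : 𝔽 × 𝔽 => (s * p.1, s * p.2)) := by
    rintro ⟨x, y⟩ ⟨u, v⟩ h
    simp only [Prod.mk.injEq] at h ⊢
    exact ⟨mul_left_cancel₀ hs h.1, mul_left_cancel₀ hs h.2⟩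
  have himg : {p : 𝔽 × 𝔽 |
      (fun x => s ^ n * F (s⁻¹ * x)) (p.1 + p.2) - c * (fun x => s ^ n * F (s⁻¹ * x)) p.1 = b ∧
      c * (fun x => s ^ n * F (s⁻¹ * x)) (p.1 + p.2 + a)
        - (fun x => s ^ n * F (s⁻¹ * x)) (p.1 + a) = c * b}
      = (fun p : 𝔽 × 𝔽 => (s * p.1, s * p.2)) '' {p : 𝔽 × 𝔽 |
        F (p.1 + p.2) - c * F p.1 = s⁻¹ ^ n * b ∧
        c * F (p.1 + p.2 + s⁻¹ * a) - F (p.1 + s⁻¹ * a) = c * (s⁻¹ ^ n * b)} := by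
    ext ⟨x, y⟩
    simp only [Set.mem_setOf_eq, Set.mem_image, Prod.mk.injEq, Prod.exists]
    constructor
    · intro hx
      refine ⟨s⁻¹ * x, s⁻¹ * y, ?_, by field_simp, by field_simp⟩
      exact (key x y).mp hx
    · rintro ⟨u, v, hu, rfl, rfl⟩
      refine (key (s * u) (s * v)).mpr ?_
      have eu : s⁻¹ * (s * u) = u := by field_simp
      have ev : s⁻¹ * (s * v) = v := by field_simp
      rw [eu, ev]
      exact hu
  unfold cBCT
  rw [himg, Set.ncard_image_of_injective _ hinj]

/-- For Dickson polynomials of the first kind over a finite field, if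
`α·s² = β` with `s ≠ 0` (i.e. `α, β` are both squares or both non-squares), then the
`c`-Boomerang uniformities of `D_n(·,α)` and `D_n(·,β)` agree. -/
theorem dickson_boomerang_uniformity_eq {𝔽 : Type*} [Field 𝔽] [Fintype 𝔽]
    (n : ℕ) (hn : 1 ≤ n) (c : 𝔽) (hc : c ≠ 0)
    (α β : 𝔽) (hα : α ≠ 0) (hβ : β ≠ 0)
    (hsq : ∃ s : 𝔽, s ≠ 0 ∧ α * s ^ 2 = β) :
    cBoomerangUniformity (fun x => (Polynomial.dickson 1 α n).eval x) c =
      cBoomerangUniformity (fun x => (Polynomial.dickson 1 β n).eval x) c := by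
  obtain ⟨s, hs, hαs⟩ := hsq
  set Fα : 𝔽 → 𝔽 := fun x => (Polynomial.dickson 1 α n).eval x with hFα
  have hFβ : (fun x => (Polynomial.dickson 1 β n).eval x)
      = fun x => s ^ n * Fα (s⁻¹ * x) := by
    funext x
    have : β = s ^ 2 * α := by rw [← hαs]; ring
    rw [this, ← mul_inv_cancel_left₀ hs x, dickson_scale s α n (s⁻¹ * x)]
    simp [hFα, mul_inv_cancel_left₀ hs]
  rw [hFβ]
  unfold cBoomerangUniformity
  congr 1
  ext m
  simp only [Set.mem_setOf_eq]
  constructor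
  · rintro ⟨a, b, ha, hb, rfl⟩
    exact ⟨s * a, s ^ n * b, mul_ne_zero hs ha, mul_ne_zero (pow_ne_zero n hs) hb, by
      rw [cBCT_scale Fα s hs n c]
      congr 1 <;> field_simp
      rw [one_div, inv_pow, inv_mul_cancel₀ (pow_ne_zero n hs)]⟩
  · rintro ⟨a, b, ha, hb, rfl⟩
    refine ⟨s⁻¹ * a, s⁻¹ ^ n * b, mul_ne_zero (inv_ne_zero hs) ha,
      mul_ne_zero (pow_ne_zero n (inv_ne_zero hs)) hb, ?_⟩
    exact cBCT_scale Fα s hs n c a b
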